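/- The hyperoctahedral group W_l of signed permutations of ℝ^l (linear transformations preserving the set {±e_1,...,±e_l}) is generated by the elements r̄_1,...,r̄_{l−1}, where r̄_i sends e_i ↦ −e_{i+1}, e_{i+1} ↦ e_i, and fixes all other basis vectors. -/

import Mathlib

open Matrix Equiv

/-- `T` acts on `ℝ^l` as the generator `r̄_i` (0-based index `i`): `e_i ↦ -e_{i+1}`,
`e_{i+1} ↦ e_i`, and all other standard basis vectors fixed. -/
def IsSignedGen (l i : ℕ) (h : i + 1 < l) (T : GL (Fin l) ℝ) : Prop :=
  (T : Matrix (Fin l) (Fin l) ℝ).mulVec (Pi.single (⟨i, by omega⟩ : Fin l) 1)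
      = -(Pi.single (⟨i + 1, h⟩ : Fin l) 1) ∧
  (T : Matrix (Fin l) (Fin l) ℝ).mulVec (Pi.single (⟨i + 1, h⟩ : Fin l) 1)
      = Pi.single (⟨i, by omega⟩ : Fin l) 1 ∧
  ∀ j : Fin l, (j : ℕ) ≠ i → (j : ℕ) ≠ i + 1 →
    (T : Matrix (Fin l) (Fin l) ℝ).mulVec (Pi.single j 1) = Pi.single j 1

namespace SG
variable {l : ℕ}

def spm (σ : Perm (Fin l)) (ε : Fin l → ℝ) : Matrix (Fin l) (Fin l) ℝ :=
  Matrix.of fun i j => if i = σ j then ε j else 0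

lemma spm_apply (σ : Perm (Fin l)) (ε : Fin l → ℝ) (i j : Fin l) :
    spm σ ε i j = if i = σ j then ε j else 0 := rfl

lemma spm_mulVec_single (σ : Perm (Fin l)) (ε : Fin l → ℝ) (j : Fin l) :
    (spm σ ε).mulVec (Pi.single j 1) = ε j • (Pi.single (σ j) 1 : Fin l → ℝ) := by
  ext i
  simp only [mulVec_single, spm_apply, mul_one, Pi.smul_apply, Pi.single_apply, smul_eq_mul]
  split_ifs <;> simp [spm_apply, *]

lemma eq_spm_of_cols (A : Matrix (Fin l) (Fin l) ℝ) (σ : Perm (Fin l)) (ε : Fin l → ℝ)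
    (h : ∀ j, A.mulVec (Pi.single j 1) = ε j • (Pi.single (σ j) 1 : Fin l → ℝ)) : A = spm σ ε := by
  ext i j
  have := congrFun (h j) i
  simp only [mulVec_single_one, mul_one, Pi.smul_apply, Pi.single_apply, smul_eq_mul,
    Matrix.col_apply] at this
  rw [this, spm_apply]
  split_ifs <;> simp

lemma spm_mul (σ τ : Perm (Fin l)) (ε δ : Fin l → ℝ) :
    spm σ ε * spm τ δ = spm (σ * τ) (fun j => ε (τ j) * δ j) := by
  ext i j
  simp only [Matrix.mul_apply, spm_apply, Perm.mul_apply]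
  rw [Finset.sum_eq_single (τ j)]
  · simp; rfl
  · intro k _ hk; simp [hk]
  · simp

lemma spm_one : spm (1 : Perm (Fin l)) (fun _ => 1) = 1 := by
  ext i j; simp [spm_apply, Matrix.one_apply]; rfl

lemma spm_id_diagonal (ε : Fin l → ℝ) : spm 1 ε = Matrix.diagonal ε := by
  ext i j
  rw [spm_apply, Matrix.diagonal_apply]
  split_ifs with h1 h2 h2 <;> simp_all

lemma spm_det (σ : Perm (Fin l)) (ε : Fin l → ℝ) :
    (spm σ ε).det = (Perm.sign σ : ℝ) * ∏ j, ε j := by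
  have h : spm σ ε = σ⁻¹.permMatrix ℝ * Matrix.diagonal ε := by
    ext i j
    rw [Matrix.mul_diagonal, spm_apply, Perm.permMatrix, PEquiv.toMatrix_apply,
      Equiv.toPEquiv_apply]
    simp only [Option.mem_def, Option.some_inj]
    by_cases hij : i = σ j
    · subst hij; simp
    · rw [if_neg hij, if_neg, zero_mul]
      intro hh
      exact hij (by rw [← hh]; simp)
  rw [h, det_mul, det_permutation, det_diagonal]
  simp


/-- inverse of a signed perm unit -/
lemma inv_val_eq (T : GL (Fin l) ℝ) (σ : Perm (Fin l)) (ε : Fin l → ℝ)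
    (hε : ∀ j, ε j = 1 ∨ ε j = -1)
    (hT : (T : Matrix (Fin l) (Fin l) ℝ) = spm σ ε) :
    ((T⁻¹ : GL (Fin l) ℝ) : Matrix (Fin l) (Fin l) ℝ) = spm σ⁻¹ (fun j => ε (σ⁻¹ j)) := by
  have hsq : ∀ j, ε j * ε j = 1 := by
    intro j; rcases hε j with h | h <;> rw [h] <;> norm_num
  have h1 : (T : Matrix (Fin l) (Fin l) ℝ) * spm σ⁻¹ (fun j => ε (σ⁻¹ j)) = 1 := by
    rw [hT, spm_mul]
    have : (fun j => ε (σ⁻¹ j) * ε (σ⁻¹ j)) = fun _ : Fin l => (1 : ℝ) := by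
      funext j; exact hsq _
    rw [mul_inv_cancel]
    calc spm 1 (fun j => ε (σ⁻¹ j) * ε (σ⁻¹ j)) = spm 1 (fun _ => 1) := by rw [this]
    _ = 1 := spm_one
  calc ((T⁻¹ : GL (Fin l) ℝ) : Matrix (Fin l) (Fin l) ℝ)
      = ((T⁻¹ : GL (Fin l) ℝ) : Matrix (Fin l) (Fin l) ℝ) *
        ((T : Matrix (Fin l) (Fin l) ℝ) * spm σ⁻¹ (fun j => ε (σ⁻¹ j))) := by rw [h1, mul_one]
    _ = (((T⁻¹ * T : GL (Fin l) ℝ)) : Matrix (Fin l) (Fin l) ℝ) * spm σ⁻¹ (fun j => ε (σ⁻¹ j)) := by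
        rw [Units.val_mul, mul_assoc]
    _ = spm σ⁻¹ (fun j => ε (σ⁻¹ j)) := by rw [inv_mul_cancel]; simp

/-- the subgroup of signed permutations of determinant one -/
def H (l : ℕ) : Subgroup (GL (Fin l) ℝ) where
  carrier := {T | (∃ σ : Perm (Fin l), ∃ ε : Fin l → ℝ, (∀ j, ε j = 1 ∨ ε j = -1) ∧
      (T : Matrix (Fin l) (Fin l) ℝ) = spm σ ε) ∧
      (T : Matrix (Fin l) (Fin l) ℝ).det = 1}
  one_mem' := by
    refine ⟨⟨1, fun _ => 1, fun j => Or.inl rfl, ?_⟩, by simp⟩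
    rw [spm_one]; rfl
  mul_mem' := by
    rintro a b ⟨⟨σ, ε, hε, ha⟩, had⟩ ⟨⟨τ, δ, hδ, hb⟩, hbd⟩
    refine ⟨⟨σ * τ, fun j => ε (τ j) * δ j, ?_, ?_⟩, ?_⟩
    · intro j
      simp only []
      rcases hε (τ j) with h1 | h1 <;> rcases hδ j with h2 | h2 <;>
        rw [h1, h2] <;> norm_num
    · rw [Units.val_mul, ha, hb, spm_mul]
    · rw [Units.val_mul, det_mul, had, hbd, mul_one]
  inv_mem' := by
    rintro a ⟨⟨σ, ε, hε, ha⟩, had⟩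
    refine ⟨⟨σ⁻¹, fun j => ε (σ⁻¹ j), fun j => hε _, inv_val_eq a σ ε hε ha⟩, ?_⟩
    have : ((a⁻¹ : GL (Fin l) ℝ) : Matrix (Fin l) (Fin l) ℝ).det *
        ((a : GL (Fin l) ℝ) : Matrix (Fin l) (Fin l) ℝ).det = 1 := by
      rw [← det_mul, ← Units.val_mul, inv_mul_cancel]; simp
    rw [had, mul_one] at this; exact this

section Main

variable {l : ℕ} (rbar : Fin (l - 1) → GL (Fin l) ℝ)
  (hr : ∀ i : Fin (l - 1), IsSignedGen l i (Nat.add_lt_of_lt_sub i.isLt) (rbar i))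

include hr in
lemma gen_matrix (i : Fin (l - 1)) :
    ∃ a b : Fin l, (a : ℕ) = (i : ℕ) ∧ (b : ℕ) = (i : ℕ) + 1 ∧
      ((rbar i : GL (Fin l) ℝ) : Matrix (Fin l) (Fin l) ℝ)
        = spm (Equiv.swap a b) (fun j => if j = a then (-1 : ℝ) else 1) := by
  have hb : (i : ℕ) + 1 < l := by have := i.isLt; omega
  set a : Fin l := ⟨i, by omega⟩ with ha_def
  set b : Fin l := ⟨(i : ℕ) + 1, hb⟩ with hb_def
  have hab : a ≠ b := by
    intro h; have := congrArg Fin.val h; simp [ha_def, hb_def] at this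
  obtain ⟨h1, h2, h3⟩ := hr i
  refine ⟨a, b, rfl, rfl, ?_⟩
  apply eq_spm_of_cols
  intro j
  by_cases hja : j = a
  · subst hja
    rw [h1]
    rw [if_pos rfl, Equiv.swap_apply_left, neg_one_smul]
  · by_cases hjb : j = b
    · subst hjb
      rw [h2, if_neg hja, Equiv.swap_apply_right, one_smul]
    · have hv1 : (j : ℕ) ≠ (i : ℕ) := fun h => hja (Fin.ext h)
      have hv2 : (j : ℕ) ≠ (i : ℕ) + 1 := fun h => hjb (Fin.ext h)
      rw [h3 j hv1 hv2, if_neg hja, Equiv.swap_apply_of_ne_of_ne hja hjb, one_smul]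

include hr in
lemma gen_mem_H (i : Fin (l - 1)) : rbar i ∈ H l := by
  obtain ⟨a, b, hav, hbv, hm⟩ := gen_matrix rbar hr i
  have hab : a ≠ b := by
    intro h; rw [h] at hav; omega
  constructor
  · exact ⟨Equiv.swap a b, _, fun j => by
      by_cases h : j = a
      · simp [h]
      · simp [h], hm⟩
  · rw [hm, spm_det]
    rw [Equiv.Perm.sign_swap hab]
    have : (∏ j : Fin l, if j = a then (-1 : ℝ) else 1) = -1 := by
      rw [Finset.prod_eq_single a (fun k _ hk => if_neg hk) (by simp)]
      simp
    rw [this]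
    norm_num

include hr in
lemma closure_le_H : Subgroup.closure (Set.range rbar) ≤ H l := by
  rw [Subgroup.closure_le]
  rintro T ⟨i, rfl⟩
  exact gen_mem_H rbar hr i

/-- sign function flipping exactly at `a` and `b` -/
def flip (a b j : Fin l) : ℝ := if j = a ∨ j = b then -1 else 1

lemma flip_sgn (a b : Fin l) : ∀ j, flip a b j = 1 ∨ flip a b j = -1 := by
  intro j; unfold flip; split_ifs <;> simp

include hr in
lemma flip_adj (a b : Fin l) (hba : (b : ℕ) = (a : ℕ) + 1) :
    ∃ F ∈ Subgroup.closure (Set.range rbar),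
      ((F : GL (Fin l) ℝ) : Matrix (Fin l) (Fin l) ℝ) = spm 1 (flip a b) := by
  have hi : (a : ℕ) < l - 1 := by have := b.isLt; omega
  set i : Fin (l - 1) := ⟨a, hi⟩ with hi_def
  obtain ⟨a', b', ha', hb', hm⟩ := gen_matrix rbar hr i
  have haa : a' = a := Fin.ext ha'
  have hbb : b' = b := Fin.ext (by rw [hb']; omega)
  rw [haa, hbb] at hm
  have hab : a ≠ b := fun h => by rw [h] at hba; omega
  refine ⟨rbar i * rbar i, mul_mem (Subgroup.subset_closure ⟨i, rfl⟩)
    (Subgroup.subset_closure ⟨i, rfl⟩), ?_⟩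
  rw [Units.val_mul, hm, spm_mul, Equiv.swap_mul_self]
  have hfun : (fun j => (if Equiv.swap a b j = a then (-1 : ℝ) else 1) *
      (if j = a then (-1 : ℝ) else 1)) = flip a b := by
    funext j
    by_cases hja : j = a
    · subst hja
      rw [Equiv.swap_apply_left, if_neg (Ne.symm hab), if_pos rfl]
      simp [flip]
    · by_cases hjb : j = b
      · subst hjb
        rw [Equiv.swap_apply_right, if_pos rfl, if_neg hja]
        simp [flip, hja]
      · rw [Equiv.swap_apply_of_ne_of_ne hja hjb, if_neg hja]
        simp [flip, hja, hjb]
  rw [hfun]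

include hr in
lemma flip_lt : ∀ d : ℕ, ∀ a b : Fin l, (a : ℕ) < (b : ℕ) → (b : ℕ) - (a : ℕ) ≤ d →
    ∃ F ∈ Subgroup.closure (Set.range rbar),
      ((F : GL (Fin l) ℝ) : Matrix (Fin l) (Fin l) ℝ) = spm 1 (flip a b) := by
  intro d
  induction d with
  | zero => intro a b h1 h2; omega
  | succ d ih =>
    intro a b h1 h2
    by_cases hadj : (b : ℕ) = (a : ℕ) + 1
    · exact flip_adj rbar hr a b hadj
    · set c : Fin l := ⟨(b : ℕ) - 1, by have := b.isLt; omega⟩ with hc_def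
      have hca : (a : ℕ) < (c : ℕ) := by simp [hc_def]; omega
      have hcb : (c : ℕ) < (b : ℕ) := by simp [hc_def]; omega
      obtain ⟨F1, hF1mem, hF1⟩ := ih a c hca (by simp [hc_def]; omega)
      obtain ⟨F2, hF2mem, hF2⟩ := flip_adj rbar hr c b (by simp [hc_def]; omega)
      refine ⟨F1 * F2, mul_mem hF1mem hF2mem, ?_⟩
      rw [Units.val_mul, hF1, hF2, spm_mul, mul_one]
      have hac : a ≠ c := fun h => by rw [h] at hca; omega
      have hcbne : c ≠ b := fun h => by rw [h] at hcb; omega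
      have habne : a ≠ b := fun h => by rw [h] at h1; omega
      have hfun : (fun j => flip a c ((1 : Perm (Fin l)) j) * flip c b j) = flip a b := by
        funext j
        simp only [Equiv.Perm.one_apply]
        unfold flip
        by_cases hja : j = a
        · subst hja
          rw [if_pos (Or.inl rfl), if_neg (fun h => h.elim hac habne), if_pos (Or.inl rfl)]
          norm_num
        · by_cases hjc : j = c
          · subst hjc
            rw [if_pos (Or.inr rfl), if_pos (Or.inl rfl),
              if_neg (fun h => h.elim (fun h' => hac h'.symm) hcbne)]
            norm_num
          · by_cases hjb : j = b
            · subst hjb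
              rw [if_neg (fun h => h.elim (fun h' => habne h'.symm) (fun h' => hcbne h'.symm)),
                if_pos (Or.inr rfl), if_pos (Or.inr rfl)]
              norm_num
            · rw [if_neg (fun h => h.elim hja hjc), if_neg (fun h => h.elim hjc hjb),
                if_neg (fun h => h.elim hja hjb)]
              norm_num
      rw [hfun]

include hr in
lemma flip_mem (a b : Fin l) (hab : a ≠ b) :
    ∃ F ∈ Subgroup.closure (Set.range rbar),
      ((F : GL (Fin l) ℝ) : Matrix (Fin l) (Fin l) ℝ) = spm 1 (flip a b) := by
  rcases lt_trichotomy (a : ℕ) (b : ℕ) with h | h | h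
  · exact flip_lt rbar hr (b : ℕ) a b h (by omega)
  · exact absurd (Fin.ext h) hab
  · obtain ⟨F, hFmem, hF⟩ := flip_lt rbar hr (a : ℕ) b a h (by omega)
    refine ⟨F, hFmem, ?_⟩
    rw [hF]
    have hfun : flip b a = flip a b := by
      funext j
      unfold flip
      by_cases h1 : j = a <;> by_cases h2 : j = b <;> simp [h1, h2]
    rw [hfun]

include hr in
lemma diag_mem : ∀ n : ℕ, ∀ ε : Fin l → ℝ, (∀ j, ε j = 1 ∨ ε j = -1) → (∏ j, ε j) = 1 →
    (Finset.univ.filter (fun j => ε j = -1)).card ≤ n →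
    ∀ T : GL (Fin l) ℝ, ((T : GL (Fin l) ℝ) : Matrix (Fin l) (Fin l) ℝ) = spm 1 ε →
    T ∈ Subgroup.closure (Set.range rbar) := by
  intro n
  induction n with
  | zero =>
    intro ε hε hprod hcard T hT
    have hemp : ∀ j, ε j = 1 := by
      intro j
      rcases hε j with h | h
      · exact h
      · exfalso
        have : j ∈ Finset.univ.filter (fun j => ε j = -1) := by simp [h]
        have := Finset.card_pos.mpr ⟨j, this⟩
        omega
    have : T = 1 := by
      apply Units.ext
      rw [hT]
      have : ε = fun _ => 1 := funext hemp
      rw [this, spm_one]; rfl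
    rw [this]; exact one_mem _
  | succ n ih =>
    intro ε hε hprod hcard T hT
    set s := Finset.univ.filter (fun j => ε j = -1) with hs_def
    rcases Finset.eq_empty_or_nonempty s with hemp | ⟨a, ha⟩
    · refine ih ε hε hprod ?_ T hT
      rw [← hs_def, hemp]; simp
    · -- card of s is even and positive, hence ≥ 2
      have hprod_split : (∏ j ∈ s, ε j) * (∏ j ∈ Finset.univ.filter (fun j => ¬ (ε j = -1)), ε j)
          = ∏ j, ε j := Finset.prod_filter_mul_prod_filter_not _ _ _
      have h1 : (∏ j ∈ s, ε j) = (-1 : ℝ) ^ s.card := by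
        rw [← Finset.prod_const]
        exact Finset.prod_congr rfl (fun j hj => by
          rw [hs_def] at hj; exact (Finset.mem_filter.mp hj).2)
      have h2 : (∏ j ∈ Finset.univ.filter (fun j => ¬ (ε j = -1)), ε j) = 1 := by
        apply Finset.prod_eq_one
        intro j hj
        rcases hε j with h | h
        · exact h
        · exact absurd h (Finset.mem_filter.mp hj).2
      have heven : Even s.card := by
        have : (-1 : ℝ) ^ s.card = 1 := by
          rw [← h1]
          have := hprod_split
          rw [h2, mul_one, hprod] at this
          exact this
        exact (neg_one_pow_eq_one_iff_even (by norm_num : (-1 : ℝ) ≠ 1)).mp this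
      have hcard2 : 2 ≤ s.card := by
        rcases heven with ⟨k, hk⟩
        have : 0 < s.card := Finset.card_pos.mpr ⟨a, ha⟩
        omega
      obtain ⟨b, hb⟩ : (s.erase a).Nonempty := by
        rw [← Finset.card_pos, Finset.card_erase_of_mem ha]; omega
      obtain ⟨hba, hbs⟩ := Finset.mem_erase.mp hb
      obtain ⟨F, hFmem, hF⟩ := flip_mem rbar hr a b (Ne.symm hba)
      have hFinv : ((F⁻¹ : GL (Fin l) ℝ) : Matrix (Fin l) (Fin l) ℝ) = spm 1 (flip a b) := by
        have := inv_val_eq F 1 (flip a b) (flip_sgn a b) hF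
        simpa using this
      set T' := F⁻¹ * T with hT'_def
      have hT' : ((T' : GL (Fin l) ℝ) : Matrix (Fin l) (Fin l) ℝ)
          = spm 1 (fun j => flip a b j * ε j) := by
        rw [hT'_def, Units.val_mul, hFinv, hT, spm_mul, mul_one]
        rfl
      have hsgn' : ∀ j, flip a b j * ε j = 1 ∨ flip a b j * ε j = -1 := by
        intro j
        rcases flip_sgn a b j with h | h <;> rcases hε j with h' | h' <;>
          rw [h, h'] <;> norm_num
      have hdetF : ((F⁻¹ : GL (Fin l) ℝ) : Matrix (Fin l) (Fin l) ℝ).det = 1 :=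
        (closure_le_H rbar hr (inv_mem hFmem)).2
      have hdetT : ((T : GL (Fin l) ℝ) : Matrix (Fin l) (Fin l) ℝ).det = 1 := by
        rw [hT, spm_det]; simp [hprod]
      have hprod' : (∏ j, flip a b j * ε j) = 1 := by
        have : ((T' : GL (Fin l) ℝ) : Matrix (Fin l) (Fin l) ℝ).det = 1 := by
          rw [hT'_def, Units.val_mul, det_mul, hdetF, hdetT, mul_one]
        rw [hT', spm_det] at this
        simpa using this
      have hcard' : (Finset.univ.filter (fun j => flip a b j * ε j = -1)).card ≤ n := by
        have haε : ε a = -1 := by have := ha; rw [hs_def] at this; simpa using this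
        have hbε : ε b = -1 := by have := hbs; rw [hs_def] at this; simpa using this
        have hsub : Finset.univ.filter (fun j => flip a b j * ε j = -1) = (s.erase a).erase b := by
          ext j
          simp only [Finset.mem_filter, Finset.mem_univ, true_and, Finset.mem_erase]
          have hmem : j ∈ s ↔ ε j = -1 := by rw [hs_def]; simp
          constructor
          · intro hj
            by_cases hja : j = a
            · exfalso; subst hja
              rw [(by unfold flip; simp : flip j b j = -1), haε] at hj; norm_num at hj
            · by_cases hjb : j = b
              · exfalso; subst hjb
                rw [(by unfold flip; simp : flip a j j = -1), hbε] at hj; norm_num at hj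
              · rw [(by unfold flip; simp [hja, hjb] : flip a b j = 1), one_mul] at hj
                exact ⟨hjb, hja, hmem.mpr hj⟩
          · rintro ⟨hjb, hja, hjs⟩
            rw [(by unfold flip; simp [hja, hjb] : flip a b j = 1), one_mul]
            exact hmem.mp hjs
        rw [hsub, Finset.card_erase_of_mem (Finset.mem_erase.mpr ⟨hba, hbs⟩),
          Finset.card_erase_of_mem ha]
        omega
      have hT'mem := ih _ hsgn' hprod' hcard' T' hT'
      have : T = F * T' := by rw [hT'_def]; group
      rw [this]
      exact mul_mem hFmem hT'mem

/-- permutations liftable to closure elements -/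
def K : Subgroup (Perm (Fin l)) where
  carrier := {σ | ∃ W ∈ Subgroup.closure (Set.range rbar), ∃ δ : Fin l → ℝ,
    (∀ j, δ j = 1 ∨ δ j = -1) ∧ ((W : GL (Fin l) ℝ) : Matrix (Fin l) (Fin l) ℝ) = spm σ δ}
  one_mem' := ⟨1, one_mem _, fun _ => 1, fun _ => Or.inl rfl, by
    rw [spm_one]; rfl⟩
  mul_mem' := by
    rintro σ τ ⟨W1, hW1, δ1, hs1, hm1⟩ ⟨W2, hW2, δ2, hs2, hm2⟩
    refine ⟨W1 * W2, mul_mem hW1 hW2, fun j => δ1 (τ j) * δ2 j, ?_, ?_⟩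
    · intro j
      simp only []
      rcases hs1 (τ j) with h1 | h1 <;> rcases hs2 j with h2 | h2 <;>
        rw [h1, h2] <;> norm_num
    · rw [Units.val_mul, hm1, hm2, spm_mul]
  inv_mem' := by
    rintro σ ⟨W, hW, δ, hs, hm⟩
    exact ⟨W⁻¹, inv_mem hW, fun j => δ (σ⁻¹ j), fun j => hs _, inv_val_eq W σ δ hs hm⟩

include hr in
lemma swap_mem_K : ∀ d : ℕ, ∀ a b : Fin l, (a : ℕ) < (b : ℕ) → (b : ℕ) - (a : ℕ) ≤ d →
    Equiv.swap a b ∈ K rbar := by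
  intro d
  induction d with
  | zero => intro a b h1 h2; omega
  | succ d ih =>
    intro a b h1 h2
    by_cases hadj : (b : ℕ) = (a : ℕ) + 1
    · have hi : (a : ℕ) < l - 1 := by have := b.isLt; omega
      set i : Fin (l - 1) := ⟨a, hi⟩ with hi_def
      obtain ⟨a', b', ha', hb', hm⟩ := gen_matrix rbar hr i
      have haa : a' = a := Fin.ext ha'
      have hbb : b' = b := Fin.ext (by rw [hb']; omega)
      rw [haa, hbb] at hm
      exact ⟨rbar i, Subgroup.subset_closure ⟨i, rfl⟩, _, fun j => by
        by_cases h : j = a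
        · simp [h]
        · simp [h], hm⟩
    · set c : Fin l := ⟨(b : ℕ) - 1, by have := b.isLt; omega⟩ with hc_def
      have hca : (a : ℕ) < (c : ℕ) := by simp [hc_def]; omega
      have hcb : (c : ℕ) < (b : ℕ) := by simp [hc_def]; omega
      have hac : a ≠ c := fun h => by rw [h] at hca; omega
      have habne : a ≠ b := fun h => by rw [h] at h1; omega
      have h1mem := ih a c hca (by simp [hc_def]; omega)
      have h2mem := ih c b hcb (by simp [hc_def]; omega)
      have key : Equiv.swap c b * Equiv.swap a c * Equiv.swap c b = Equiv.swap b a :=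
        Equiv.swap_mul_swap_mul_swap hac habne
      have : Equiv.swap a b = Equiv.swap c b * Equiv.swap a c * Equiv.swap c b := by
        rw [key, Equiv.swap_comm]
      rw [this]
      exact mul_mem (mul_mem h2mem h1mem) h2mem

include hr in
lemma mem_K (σ : Perm (Fin l)) : σ ∈ K rbar := by
  have htop : ⊤ ≤ K rbar := by
    rw [← Equiv.Perm.closure_isSwap, Subgroup.closure_le]
    rintro τ ⟨a, b, hab, rfl⟩
    rcases lt_trichotomy (a : ℕ) (b : ℕ) with h | h | h
    · exact swap_mem_K rbar hr (b : ℕ) a b h (by omega)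
    · exact absurd (Fin.ext h) hab
    · rw [Equiv.swap_comm]
      exact swap_mem_K rbar hr (a : ℕ) b a h (by omega)
  exact htop trivial

/-- extract a signed permutation from the image condition -/
lemma isSP_of_image (T : GL (Fin l) ℝ)
    (himg : (Matrix.mulVec (T : Matrix (Fin l) (Fin l) ℝ)) ''
        {v | ∃ j : Fin l, v = Pi.single j 1 ∨ v = -(Pi.single j 1)} =
      {v | ∃ j : Fin l, v = Pi.single j 1 ∨ v = -(Pi.single j 1)}) :
    ∃ σ : Perm (Fin l), ∃ ε : Fin l → ℝ, (∀ j, ε j = 1 ∨ ε j = -1) ∧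
      ((T : GL (Fin l) ℝ) : Matrix (Fin l) (Fin l) ℝ) = spm σ ε := by
  have hcol : ∀ j : Fin l, ∃ k : Fin l, ∃ s : ℝ, (s = 1 ∨ s = -1) ∧
      (T : Matrix (Fin l) (Fin l) ℝ).mulVec (Pi.single j 1)
        = s • (Pi.single k 1 : Fin l → ℝ) := by
    intro j
    have hmem : (T : Matrix (Fin l) (Fin l) ℝ).mulVec (Pi.single j 1) ∈
        {v | ∃ k : Fin l, v = Pi.single k 1 ∨ v = -(Pi.single k 1)} := by
      rw [← himg]
      exact ⟨Pi.single j 1, ⟨j, Or.inl rfl⟩, rfl⟩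
    obtain ⟨k, hk | hk⟩ := hmem
    · exact ⟨k, 1, Or.inl rfl, by rw [hk, one_smul]⟩
    · exact ⟨k, -1, Or.inr rfl, by rw [hk, neg_one_smul]⟩
  choose f ε hsgn hcols using hcol
  have hinj : Function.Injective f := by
    intro j1 j2 hf
    by_contra hne
    have e1 : (T : Matrix (Fin l) (Fin l) ℝ).mulVec (ε j2 • (Pi.single j1 1 : Fin l → ℝ))
        = (T : Matrix (Fin l) (Fin l) ℝ).mulVec (ε j1 • (Pi.single j2 1 : Fin l → ℝ)) := by
      rw [Matrix.mulVec_smul, Matrix.mulVec_smul, hcols j1, hcols j2, hf,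
        smul_comm]
    have e2 : (ε j2 • (Pi.single j1 1 : Fin l → ℝ)) = ε j1 • (Pi.single j2 1 : Fin l → ℝ) := by
      have := congrArg (fun v =>
        ((T⁻¹ : GL (Fin l) ℝ) : Matrix (Fin l) (Fin l) ℝ).mulVec v) e1
      simpa only [Matrix.mulVec_mulVec, ← Units.val_mul, inv_mul_cancel, Units.val_one,
        Matrix.one_mulVec] using this
    have := congrFun e2 j1
    simp only [Pi.smul_apply, smul_eq_mul] at this
    rw [Pi.single_eq_same, Pi.single_eq_of_ne (Ne.symm (Ne.symm hne))] at this
    · rcases hsgn j2 with h | h <;> rw [h] at this <;> norm_num at this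
  have hbij := Finite.injective_iff_bijective.mp hinj
  refine ⟨Equiv.ofBijective f hbij, ε, hsgn, ?_⟩
  apply eq_spm_of_cols
  intro j
  exact hcols j

/-- a signed permutation satisfies the image condition -/
lemma image_of_isSP (T : GL (Fin l) ℝ) (σ : Perm (Fin l)) (ε : Fin l → ℝ)
    (hε : ∀ j, ε j = 1 ∨ ε j = -1)
    (hm : ((T : GL (Fin l) ℝ) : Matrix (Fin l) (Fin l) ℝ) = spm σ ε) :
    (Matrix.mulVec (T : Matrix (Fin l) (Fin l) ℝ)) ''
        {v | ∃ j : Fin l, v = Pi.single j 1 ∨ v = -(Pi.single j 1)} =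
      {v | ∃ j : Fin l, v = Pi.single j 1 ∨ v = -(Pi.single j 1)} := by
  have hcol : ∀ j : Fin l, (T : Matrix (Fin l) (Fin l) ℝ).mulVec (Pi.single j 1)
      = ε j • (Pi.single (σ j) 1 : Fin l → ℝ) := by
    intro j; rw [hm]; exact spm_mulVec_single σ ε j
  apply Set.Subset.antisymm
  · rintro v ⟨u, ⟨j, hu | hu⟩, rfl⟩
    · subst hu
      rw [hcol j]
      rcases hε j with h | h <;> rw [h]
      · exact ⟨σ j, Or.inl (one_smul _ _)⟩
      · exact ⟨σ j, Or.inr (by rw [neg_one_smul])⟩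
    · subst hu
      rw [Matrix.mulVec_neg, hcol j]
      rcases hε j with h | h <;> rw [h]
      · exact ⟨σ j, Or.inr (by rw [one_smul])⟩
      · exact ⟨σ j, Or.inl (by rw [neg_one_smul, neg_neg])⟩
  · rintro v ⟨k, hv | hv⟩ <;> subst hv
    · rcases hε (σ⁻¹ k) with h | h
      · refine ⟨Pi.single (σ⁻¹ k) 1, ⟨σ⁻¹ k, Or.inl rfl⟩, ?_⟩
        rw [hcol, h, one_smul, ← Perm.mul_apply, mul_inv_cancel, Perm.one_apply]
      · refine ⟨-(Pi.single (σ⁻¹ k) 1), ⟨σ⁻¹ k, Or.inr rfl⟩, ?_⟩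
        rw [Matrix.mulVec_neg, hcol, h, neg_one_smul, neg_neg,
          ← Perm.mul_apply, mul_inv_cancel, Perm.one_apply]
    · rcases hε (σ⁻¹ k) with h | h
      · refine ⟨-(Pi.single (σ⁻¹ k) 1), ⟨σ⁻¹ k, Or.inr rfl⟩, ?_⟩
        rw [Matrix.mulVec_neg, hcol, h, one_smul, ← Perm.mul_apply, mul_inv_cancel, Perm.one_apply]
      · refine ⟨Pi.single (σ⁻¹ k) 1, ⟨σ⁻¹ k, Or.inl rfl⟩, ?_⟩
        rw [hcol, h, neg_one_smul, ← Perm.mul_apply, mul_inv_cancel, Perm.one_apply]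

end Main
end SG

/-- The subgroup of `GL(l,ℝ)` generated by the elements `r̄_1, ..., r̄_{l-1}` is exactly the
set of signed permutations (linear maps preserving `{±e_1,...,±e_l}`) of determinant `1`. -/
theorem signedGens_generate (l : ℕ) (rbar : Fin (l - 1) → GL (Fin l) ℝ)
    (hr : ∀ i : Fin (l - 1), IsSignedGen l i (by have := i.isLt; omega) (rbar i)) :
    ∀ T : GL (Fin l) ℝ,
      T ∈ Subgroup.closure (Set.range rbar) ↔
        ((Matrix.mulVec (T : Matrix (Fin l) (Fin l) ℝ)) ''
            {v | ∃ j : Fin l, v = Pi.single j 1 ∨ v = -(Pi.single j 1)} =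
          {v | ∃ j : Fin l, v = Pi.single j 1 ∨ v = -(Pi.single j 1)} ∧
        (T : Matrix (Fin l) (Fin l) ℝ).det = 1) := by
  intro T
  constructor
  · intro hT
    obtain ⟨⟨σ, ε, hε, hm⟩, hdet⟩ := SG.closure_le_H rbar hr hT
    exact ⟨SG.image_of_isSP T σ ε hε hm, hdet⟩
  · rintro ⟨himg, hdet⟩
    obtain ⟨σ, ε, hε, hm⟩ := SG.isSP_of_image T himg
    obtain ⟨W, hWmem, δ, hδ, hWm⟩ := SG.mem_K rbar hr σ
    set D := W⁻¹ * T with hD_def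
    have hWinv : ((W⁻¹ : GL (Fin l) ℝ) : Matrix (Fin l) (Fin l) ℝ)
        = SG.spm σ⁻¹ (fun j => δ (σ⁻¹ j)) := SG.inv_val_eq W σ δ hδ hWm
    have hDm : ((D : GL (Fin l) ℝ) : Matrix (Fin l) (Fin l) ℝ)
        = SG.spm 1 (fun j => δ j * ε j) := by
      rw [hD_def, Units.val_mul, hWinv, hm, SG.spm_mul, inv_mul_cancel]
      refine congrArg (SG.spm 1) ?_
      funext j
      simp
    have hsgn' : ∀ j, δ j * ε j = 1 ∨ δ j * ε j = -1 := by
      intro j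
      rcases hδ j with h1 | h1 <;> rcases hε j with h2 | h2 <;>
        rw [h1, h2] <;> norm_num
    have hdetW : ((W⁻¹ : GL (Fin l) ℝ) : Matrix (Fin l) (Fin l) ℝ).det = 1 :=
      (SG.closure_le_H rbar hr (inv_mem hWmem)).2
    have hprod' : (∏ j, δ j * ε j) = 1 := by
      have hdetD : ((D : GL (Fin l) ℝ) : Matrix (Fin l) (Fin l) ℝ).det = 1 := by
        rw [hD_def, Units.val_mul, Matrix.det_mul, hdetW, hdet, mul_one]
      rw [hDm, SG.spm_det] at hdetD
      simpa using hdetD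
    have hDmem := SG.diag_mem rbar hr
      (Finset.univ.filter (fun j => δ j * ε j = -1)).card
      (fun j => δ j * ε j) hsgn' hprod' le_rfl D hDm
    have : T = W * D := by rw [hD_def]; group
    rw [this]
    exact mul_mem hWmem hDmem
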